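/- arXiv:2210.12516 — 6 statements merged into one kernel-verified Lean document; each statement's English description precedes it below -/
import Mathlib

section
/- Let m > 0 and λ ∈ ℂ with λ ∉ (−∞,−m] ∪ [m,∞). Define a_λ(ξ) := (ξ²+m²)^{1/2}/(ξ²+m²−λ²) for ξ ∈ ℝᵈ (where ξ² = |ξ|²). Then sup_{ξ∈ℝᵈ} |a_λ(ξ)| ≤ (|λ|+m)/dist(λ², [m²,∞)). -/
open scoped RealInnerProductSpace

/-- bound on `a_λ` for the Klein-Gordon pencil. -/
theorem stmt2 (d : ℕ) (m : ℝ) (hm : 0 < m) (lam : ℂ)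
    (hlam : ∀ t : ℝ, (t ≤ -m ∨ m ≤ t) → lam ≠ (t : ℂ)) :
    ∀ ξ : EuclideanSpace ℝ (Fin d),
      norm (((Real.sqrt (‖ξ‖ ^ 2 + m ^ 2) : ℝ) : ℂ) /
          (((‖ξ‖ ^ 2 + m ^ 2 : ℝ) : ℂ) - lam ^ 2))
        ≤ (norm lam + m) /
            Metric.infDist (lam ^ 2) {z : ℂ | ∃ t : ℝ, m ^ 2 ≤ t ∧ z = (t : ℂ)} := by
  intro ξ
  set L : ℝ := norm lam with hLdef
  have hL0 : 0 ≤ L := norm_nonneg lam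
  set S : Set ℂ := {z : ℂ | ∃ t : ℝ, m ^ 2 ≤ t ∧ z = (t : ℂ)} with hSdef
  set D : ℝ := Metric.infDist (lam ^ 2) S with hDdef
  -- `lam ^ 2 ∉ S`
  have hnotmem : lam ^ 2 ∉ S := by
    rintro ⟨t, ht, heq⟩
    have ht0 : (0 : ℝ) ≤ t := le_trans (by positivity) ht
    have hmt : m ≤ Real.sqrt t := by
      have := Real.sqrt_le_sqrt ht
      rwa [Real.sqrt_sq hm.le] at this
    have hsq : ((Real.sqrt t : ℝ) : ℂ) ^ 2 = (t : ℂ) := by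
      rw [← Complex.ofReal_pow, Real.sq_sqrt ht0]
    have hfac : (lam - ((Real.sqrt t : ℝ) : ℂ)) * (lam + ((Real.sqrt t : ℝ) : ℂ)) = 0 := by
      linear_combination heq - hsq
    rcases mul_eq_zero.mp hfac with h | h
    · exact hlam (Real.sqrt t) (Or.inr hmt) (by linear_combination h)
    · refine hlam (-(Real.sqrt t)) (Or.inl (by linarith)) ?_
      push_cast
      linear_combination h
  -- `S` is closed and nonempty
  have hSim : S = (fun t : ℝ => (t : ℂ)) '' Set.Ici (m ^ 2) := by
    ext z
    constructor
    · rintro ⟨t, ht, rfl⟩; exact ⟨t, ht, rfl⟩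
    · rintro ⟨t, ht, rfl⟩; exact ⟨t, ht, rfl⟩
  have hSclosed : IsClosed S := by
    rw [hSim]
    exact Complex.isometry_ofReal.isClosedEmbedding.isClosedMap _ isClosed_Ici
  have hSne : S.Nonempty := ⟨((m ^ 2 : ℝ) : ℂ), m ^ 2, le_refl _, rfl⟩
  have hDpos : 0 < D := (hSclosed.notMem_iff_infDist_pos hSne).mp hnotmem
  -- basic distance bound
  have hDle : ∀ x : ℝ, m ^ 2 ≤ x → D ≤ norm ((x : ℂ) - lam ^ 2) := by
    intro x hx
    have hmem : ((x : ℝ) : ℂ) ∈ S := ⟨x, hx, rfl⟩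
    have := Metric.infDist_le_dist_of_mem (x := lam ^ 2) hmem
    rwa [Complex.dist_eq, norm_sub_rev] at this
  -- key monotonicity inequality
  have key : ∀ x y : ℝ, 0 ≤ x → x ≤ y → L ≤ x →
      y * norm (((x ^ 2 : ℝ) : ℂ) - lam ^ 2)
        ≤ x * norm (((y ^ 2 : ℝ) : ℂ) - lam ^ 2) := by
    intro x y hx hxy hLx
    set c : ℝ := (lam ^ 2).re
    set e : ℝ := (lam ^ 2).im
    set A : ℝ := norm (((x ^ 2 : ℝ) : ℂ) - lam ^ 2) with hAdef
    set B : ℝ := norm (((y ^ 2 : ℝ) : ℂ) - lam ^ 2) with hBdef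
    have hA : A ^ 2 = (x ^ 2 - c) ^ 2 + e ^ 2 := by
      rw [hAdef, Complex.sq_norm, Complex.normSq_apply]
      simp only [Complex.sub_re, Complex.sub_im, Complex.ofReal_re, Complex.ofReal_im, c, e]
      ring
    have hB : B ^ 2 = (y ^ 2 - c) ^ 2 + e ^ 2 := by
      rw [hBdef, Complex.sq_norm, Complex.normSq_apply]
      simp only [Complex.sub_re, Complex.sub_im, Complex.ofReal_re, Complex.ofReal_im, c, e]
      ring
    have hce : c ^ 2 + e ^ 2 = L ^ 4 := by
      have h1 : (norm (lam ^ 2)) ^ 2 = Complex.normSq (lam ^ 2) :=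
        Complex.sq_norm _
      rw [Complex.normSq_apply, norm_pow] at h1
      calc c ^ 2 + e ^ 2 = (lam ^ 2).re * (lam ^ 2).re + (lam ^ 2).im * (lam ^ 2).im := by
            ring
        _ = (L ^ 2) ^ 2 := h1.symm
        _ = L ^ 4 := by ring
    have h1 : L ^ 2 ≤ x ^ 2 := pow_le_pow_left₀ hL0 hLx 2
    have h2 : x ^ 2 ≤ y ^ 2 := pow_le_pow_left₀ hx hxy 2
    have hsq : (y * A) ^ 2 ≤ (x * B) ^ 2 := by
      have hfacts : 0 ≤ (y ^ 2 - x ^ 2) * (x ^ 2 * y ^ 2 - L ^ 4) := by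
        apply mul_nonneg (by linarith)
        nlinarith [h1, h2]
      rw [mul_pow, mul_pow, hA, hB]
      nlinarith [hfacts, hce]
    have hyA : 0 ≤ y * A := mul_nonneg (hx.trans hxy) (norm_nonneg _)
    have hxB : 0 ≤ x * B := mul_nonneg hx (norm_nonneg _)
    have := Real.sqrt_le_sqrt hsq
    rwa [Real.sqrt_sq hyA, Real.sqrt_sq hxB] at this
  -- now the main estimate
  set s : ℝ := ‖ξ‖ ^ 2 + m ^ 2 with hsdef
  have hms : m ^ 2 ≤ s := by nlinarith [sq_nonneg ‖ξ‖]
  have hs0 : (0 : ℝ) ≤ s := le_trans (by positivity) hms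
  set u : ℝ := Real.sqrt s with hudef
  have hu2 : u ^ 2 = s := Real.sq_sqrt hs0
  have hmu : m ≤ u := by
    have := Real.sqrt_le_sqrt hms
    rwa [Real.sqrt_sq hm.le] at this
  have hu0 : 0 ≤ u := Real.sqrt_nonneg s
  have hden : 0 < norm ((s : ℂ) - lam ^ 2) := lt_of_lt_of_le hDpos (hDle s hms)
  rw [norm_div, Complex.norm_of_nonneg hu0, div_le_div_iff₀ hden hDpos]
  -- goal : u * D ≤ (L + m) * norm (↑s - lam ^ 2)
  rcases le_or_gt u (L + m) with hcase | hcase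
  · exact mul_le_mul hcase (hDle s hms) (Metric.infDist_nonneg) (by positivity)
  · have hv : m ^ 2 ≤ (L + m) ^ 2 := by nlinarith
    calc u * D ≤ u * norm ((((L + m) ^ 2 : ℝ) : ℂ) - lam ^ 2) :=
          mul_le_mul_of_nonneg_left (hDle ((L + m) ^ 2) hv) hu0
      _ ≤ (L + m) * norm (((u ^ 2 : ℝ) : ℂ) - lam ^ 2) :=
          key (L + m) u (by positivity) hcase.le (by linarith)
      _ = (L + m) * norm ((s : ℂ) - lam ^ 2) := by rw [hu2]
end

section
/- Let H be a Hilbert space, H₀ a self-adjoint operator with H₀ ≥ m² > 0, and V a symmetric operator with dom(H₀^{1/2}) ⊂ dom(V). Suppose there exist constants a ≥ 0 and 0 ≤ b < 1 such that ‖Vx‖² ≤ a²‖x‖² + b²‖H₀^{1/2}x‖² for all x ∈ dom(H₀^{1/2}). If λ ∈ ℂ∖ℝ and u ∈ dom(H₀) with ‖u‖ = 1 satisfies H₀u − (V−λ)²u = 0, then Re λ = ⟨Vu,u⟩ and |λ|² = ‖Vu‖² − ‖H₀^{1/2}u‖² ≤ a²/(1−b²) − m². -/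
open scoped InnerProductSpace ComplexConjugate

/-- enclosure for non-real eigenvalues of the Klein-Gordon pencil
`T_V(λ) = H₀ − (V−λ)²` under a relative bound `‖Vx‖² ≤ a²‖x‖² + b²‖H₀^{1/2}x‖²`.
Here `S` plays the role of `H₀^{1/2}`. -/
theorem stmt7 {H : Type*} [NormedAddCommGroup H] [InnerProductSpace ℂ H] [CompleteSpace H]
    (m a b : ℝ) (hm : 0 < m) (ha : 0 ≤ a) (hb0 : 0 ≤ b) (hb : b < 1)
    (H0 V S : H →ₗ.[ℂ] H)
    (hdSV : S.domain ≤ V.domain)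
    (hd0S : H0.domain ≤ S.domain)
    -- `V` is symmetric
    (hVsym : ∀ x y : V.domain, ⟪V x, (y : H)⟫_ℂ = ⟪(x : H), V y⟫_ℂ)
    -- `H₀` is self-adjoint with `⟨H₀x,x⟩ = ‖H₀^{1/2}x‖²` on `dom H₀`
    (hsq : ∀ x : H0.domain, ⟪H0 x, (x : H)⟫_ℂ = ((‖S ⟨(x : H), hd0S x.2⟩‖ ^ 2 : ℝ) : ℂ))
    -- `H₀ ≥ m² > 0`
    (hlow : ∀ x : S.domain, m ^ 2 * ‖(x : H)‖ ^ 2 ≤ ‖S x‖ ^ 2)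
    -- relative bound for `V` with respect to `H₀^{1/2}`
    (hrel : ∀ x : S.domain,
      ‖V ⟨(x : H), hdSV x.2⟩‖ ^ 2 ≤ a ^ 2 * ‖(x : H)‖ ^ 2 + b ^ 2 * ‖S x‖ ^ 2)
    (lam : ℂ) (hlam : lam.im ≠ 0)
    (u : H) (hu0 : u ∈ H0.domain) (huV : u ∈ V.domain)
    (hVu : V ⟨u, huV⟩ ∈ V.domain)
    (hnorm : ‖u‖ = 1)
    -- the eigenvalue equation `H₀u − (V−λ)²u = 0`
    (heq : H0 ⟨u, hu0⟩ - V ⟨V ⟨u, huV⟩, hVu⟩ + (2 * lam) • V ⟨u, huV⟩ - lam ^ 2 • u = 0) :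
    ((lam.re : ℂ) = ⟪V ⟨u, huV⟩, u⟫_ℂ) ∧
    (‖lam‖ ^ 2 = ‖V ⟨u, huV⟩‖ ^ 2 - ‖S ⟨u, hd0S hu0⟩‖ ^ 2) ∧
    ‖lam‖ ^ 2 ≤ a ^ 2 / (1 - b ^ 2) - m ^ 2 := by
  set Vu : H := V ⟨u, huV⟩ with hVudef
  -- ⟪Vu, u⟫ is real
  have hwconj : ⟪Vu, u⟫_ℂ = conj ⟪Vu, u⟫_ℂ := by
    have h := hVsym ⟨u, huV⟩ ⟨u, huV⟩
    exact h.trans (inner_conj_symm u Vu).symm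
  have hwim : (⟪Vu, u⟫_ℂ).im = 0 := Complex.conj_eq_iff_im.mp hwconj.symm
  -- ⟪V(Vu), u⟫ = ‖Vu‖²
  have hVV : ⟪V ⟨Vu, hVu⟩, u⟫_ℂ = ((‖Vu‖ ^ 2 : ℝ) : ℂ) := by
    have h := hVsym ⟨Vu, hVu⟩ ⟨u, huV⟩
    simp only at h
    rw [h, ← hVudef, inner_self_eq_norm_sq_to_K]
    norm_cast
  -- the main complex scalar equation
  have hE : ((‖S ⟨u, hd0S hu0⟩‖ ^ 2 : ℝ) : ℂ) - ((‖Vu‖ ^ 2 : ℝ) : ℂ)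
      + conj (2 * lam) * ⟪Vu, u⟫_ℂ - conj (lam ^ 2) = 0 := by
    have h := congrArg (fun z => ⟪z, u⟫_ℂ) heq
    simp only [inner_sub_left, inner_add_left, inner_smul_left, inner_zero_left] at h
    rw [hsq ⟨u, hu0⟩, hVV, inner_self_eq_norm_sq_to_K, hnorm] at h
    push_cast at h ⊢
    rw [← h]
    ring
  set s2 : ℝ := ‖S ⟨u, hd0S hu0⟩‖ ^ 2 with hs2
  set W : ℝ := ‖Vu‖ ^ 2 with hW
  set wr : ℝ := (⟪Vu, u⟫_ℂ).re with hwr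
  have hre := congrArg Complex.re hE
  have him := congrArg Complex.im hE
  simp only [Complex.sub_re, Complex.add_re, Complex.sub_im, Complex.add_im,
    Complex.mul_re, Complex.mul_im, Complex.conj_re, Complex.conj_im,
    Complex.ofReal_re, Complex.ofReal_im, Complex.zero_re, Complex.zero_im,
    Complex.mul_im, hwim, ← hwr] at hre him
  rw [show (lam ^ 2).re = lam.re ^ 2 - lam.im ^ 2 by
        rw [sq, Complex.mul_re]; ring] at hre
  rw [show (lam ^ 2).im = 2 * (lam.re * lam.im) by
        rw [sq, Complex.mul_im]; ring] at him
  norm_num at hre him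
  -- wr = Re λ
  have hwrre : wr = lam.re := by
    have h : lam.im * (lam.re - wr) = 0 := by linarith
    rcases mul_eq_zero.mp h with h | h
    · exact absurd h hlam
    · linarith
  have habs : ‖lam‖ ^ 2 = lam.re ^ 2 + lam.im ^ 2 := by
    rw [Complex.sq_norm, Complex.normSq_apply]; ring
  rw [hwrre] at hre
  have hA2 : ‖lam‖ ^ 2 = W - s2 := by
    rw [habs]; nlinarith [hre]
  refine ⟨?_, hA2, ?_⟩
  · apply Complex.ext
    · simp [← hwr, hwrre]
    · simp [hwim]
  · -- the final bound
    have hrel' := hrel ⟨u, hd0S hu0⟩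
    have hlow' := hlow ⟨u, hd0S hu0⟩
    simp only [hnorm] at hrel' hlow'
    have hrelW : W ≤ a ^ 2 + b ^ 2 * s2 := by
      have hx : (⟨u, hdSV (hd0S hu0)⟩ : V.domain) = ⟨u, huV⟩ := rfl
      rw [hx] at hrel'
      rw [hW]; nlinarith [hrel']
    have hlows : m ^ 2 ≤ s2 := by nlinarith [hlow']
    clear_value s2 W wr
    clear hE hVV hwr hs2 hW hrel' hlow' heq hsq hrel hlow hVsym
    clear hwconj hwim hre him habs hVudef
    clear_value Vu
    clear hVu
    clear Vu
    have hc : (0 : ℝ) < 1 - b ^ 2 := by nlinarith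
    have hA0 : (0 : ℝ) ≤ ‖lam‖ ^ 2 := sq_nonneg _
    have h1 : (1 - b ^ 2) * s2 ≤ a ^ 2 := by nlinarith [hA0, hA2, hrelW]
    have h2 : ‖lam‖ ^ 2 * (1 - b ^ 2) ≤ (a ^ 2 - (1 - b ^ 2) * s2) * (1 - b ^ 2) := by
      nlinarith [hA2, hrelW, hc]
    have h3 : (0 : ℝ) ≤ (1 - b ^ 2) * (s2 - m ^ 2) :=
      mul_nonneg hc.le (by linarith)
    have h4 : (0 : ℝ) ≤ b ^ 2 * (a ^ 2 - (1 - b ^ 2) * s2) :=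
      mul_nonneg (sq_nonneg b) (by linarith)
    have key : (‖lam‖ ^ 2 + m ^ 2) * (1 - b ^ 2) ≤ a ^ 2 := by nlinarith [h2, h3, h4]
    have := (le_div_iff₀ hc).mpr key
    linarith
end

section
/- Let H be a Hilbert space, H₀ ≥ m² > 0 self-adjoint, and V symmetric with dom(H₀^{1/2}) ⊂ dom(V). If λ ∈ ℂ∖ℝ, u ∈ dom(H₀), ‖u‖ = 1, and H₀u − (V−λ)²u = 0, then taking real and imaginary parts of ⟨T_V(λ)u,u⟩ = 0 yields Re λ = ⟨Vu,u⟩ and |λ|² = ‖Vu‖² − ‖H₀^{1/2}u‖². In particular ‖Vu‖² ≥ ‖H₀^{1/2}u‖² ≥ m², so every non-real eigenvalue λ of the pencil satisfies |λ|² ≤ ‖Vu‖² − m². -/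
open scoped InnerProductSpace

/-- for a non-real eigenvalue `λ` of the Klein-Gordon pencil
`T_V(λ) = H₀ − (V−λ)²` with normalized eigenfunction `u`,
`Re λ = ⟨Vu,u⟩`, `|λ|² = ‖Vu‖² − ‖H₀^{1/2}u‖²`, and since
`‖Vu‖² ≥ ‖H₀^{1/2}u‖² ≥ m²`, one has `|λ|² ≤ ‖Vu‖² − m²`.
Here `S` plays the role of `H₀^{1/2}`. -/
theorem stmt8 {H : Type*} [NormedAddCommGroup H] [InnerProductSpace ℂ H] [CompleteSpace H]
    (m : ℝ) (hm : 0 < m)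
    (H0 V S : H →ₗ.[ℂ] H)
    (hdSV : S.domain ≤ V.domain)
    (hd0S : H0.domain ≤ S.domain)
    (hVsym : ∀ x y : V.domain, ⟪V x, (y : H)⟫_ℂ = ⟪(x : H), V y⟫_ℂ)
    (hsq : ∀ x : H0.domain, ⟪H0 x, (x : H)⟫_ℂ = ((‖S ⟨(x : H), hd0S x.2⟩‖ ^ 2 : ℝ) : ℂ))
    (hlow : ∀ x : S.domain, m ^ 2 * ‖(x : H)‖ ^ 2 ≤ ‖S x‖ ^ 2)
    (lam : ℂ) (hlam : lam.im ≠ 0)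
    (u : H) (hu0 : u ∈ H0.domain) (huV : u ∈ V.domain)
    (hVu : V ⟨u, huV⟩ ∈ V.domain)
    (hnorm : ‖u‖ = 1)
    (heq : H0 ⟨u, hu0⟩ - V ⟨V ⟨u, huV⟩, hVu⟩ + (2 * lam) • V ⟨u, huV⟩ - lam ^ 2 • u = 0) :
    ((lam.re : ℂ) = ⟪V ⟨u, huV⟩, u⟫_ℂ) ∧
    (‖lam‖ ^ 2 = ‖V ⟨u, huV⟩‖ ^ 2 - ‖S ⟨u, hd0S hu0⟩‖ ^ 2) ∧
    (m ^ 2 ≤ ‖S ⟨u, hd0S hu0⟩‖ ^ 2 ∧ ‖S ⟨u, hd0S hu0⟩‖ ^ 2 ≤ ‖V ⟨u, huV⟩‖ ^ 2) ∧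
    ‖lam‖ ^ 2 ≤ ‖V ⟨u, huV⟩‖ ^ 2 - m ^ 2 := by

  set s : ℝ := ‖S ⟨u, hd0S hu0⟩‖ ^ 2 with hs
  set v : ℝ := ‖V ⟨u, huV⟩‖ ^ 2 with hv
  set a : ℂ := ⟪V ⟨u, huV⟩, u⟫_ℂ with ha
  -- a is real
  have ha_real : a = (a.re : ℂ) := by
    have h1 : ⟪V ⟨u, huV⟩, u⟫_ℂ = ⟪u, V ⟨u, huV⟩⟫_ℂ := hVsym ⟨u, huV⟩ ⟨u, huV⟩
    have hc : starRingEnd ℂ a = a := by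
      rw [ha, inner_conj_symm]; exact h1.symm
    exact (Complex.conj_eq_iff_re.mp hc).symm
  -- inner products
  have hSinner : ⟪u, H0 ⟨u, hu0⟩⟫_ℂ = (s : ℂ) := by
    have := hsq ⟨u, hu0⟩
    have h2 : ⟪u, H0 ⟨u, hu0⟩⟫_ℂ = starRingEnd ℂ ⟪H0 ⟨u, hu0⟩, u⟫_ℂ := (inner_conj_symm _ _).symm
    rw [h2, this, Complex.conj_ofReal]
  have hVVinner : ⟪u, V ⟨V ⟨u, huV⟩, hVu⟩⟫_ℂ = (v : ℂ) := by
    have h1 := hVsym ⟨u, huV⟩ ⟨V ⟨u, huV⟩, hVu⟩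
    rw [← h1]
    simp only [hv]
    rw [@inner_self_eq_norm_sq_to_K ℂ]
    norm_cast
  have haconj : ⟪u, V ⟨u, huV⟩⟫_ℂ = a := (hVsym ⟨u, huV⟩ ⟨u, huV⟩).symm
  have huu : ⟪u, u⟫_ℂ = 1 := by
    rw [@inner_self_eq_norm_sq_to_K ℂ, hnorm]; norm_num
  have key : (s : ℂ) - v + 2 * lam * a - lam ^ 2 = 0 := by
    have h := congrArg (fun w => ⟪u, w⟫_ℂ) heq
    simp only [inner_sub_right, inner_add_right, inner_smul_right, inner_zero_right] at h
    rw [hSinner, hVVinner, haconj, huu] at h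
    linear_combination h
  rw [ha_real] at key
  have hre : (s : ℝ) - v + 2 * lam.re * a.re - (lam.re * lam.re - lam.im * lam.im) = 0 := by
    have h := congrArg Complex.re key
    simp [Complex.add_re, Complex.sub_re, Complex.mul_re, pow_two] at h
    linarith
  have him : 2 * lam.im * a.re - (lam.re * lam.im + lam.im * lam.re) = 0 := by
    have h := congrArg Complex.im key
    simp [Complex.add_im, Complex.sub_im, Complex.mul_im, pow_two] at h
    linarith
  have hare : a.re = lam.re := by
    have h2 : lam.im * (a.re - lam.re) = 0 := by linear_combination him / 2
    rcases mul_eq_zero.mp h2 with h | h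
    · exact absurd h hlam
    · linarith
  have habs : ‖lam‖ ^ 2 = lam.re ^ 2 + lam.im ^ 2 := by
    rw [Complex.sq_norm, Complex.normSq_apply]; ring
  have hmain : ‖lam‖ ^ 2 = v - s := by
    rw [hare] at hre
    rw [habs]; linear_combination hre
  have hlow' : m ^ 2 ≤ s := by
    have := hlow ⟨u, hd0S hu0⟩
    simpa [hnorm] using this
  have hsv : s ≤ v := by
    nlinarith [hmain, sq_nonneg (‖lam‖)]
  refine ⟨?_, hmain, ⟨hlow', hsv⟩, by linarith [hmain]⟩
  rw [ha_real]
  norm_cast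
  exact hare.symm
end

section
/- Let H be a Hilbert space, H₀ ≥ m² > 0 self-adjoint, V bounded symmetric with V H₀^{-1/2} compact. Then every non-real eigenvalue λ of the pencil T_V(λ) = H₀ − (V−λ)² satisfies |λ|² ≤ ‖V‖² − m² and Re λ ∈ W(V), where W(V) is the numerical range of V. -/
open scoped InnerProductSpace

set_option maxHeartbeats 1600000 in
/-- for `V` bounded symmetric with `V H₀^{-1/2}` compact, every non-real
eigenvalue `λ` of the pencil `T_V(λ) = H₀ − (V−λ)²` satisfies `|λ|² ≤ ‖V‖² − m²` and
`Re λ ∈ W(V)`. Here `S` plays the role of `H₀^{1/2}` and `Kc` of `V H₀^{-1/2}`. -/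
theorem stmt9 {H : Type*} [NormedAddCommGroup H] [InnerProductSpace ℂ H] [CompleteSpace H]
    (m : ℝ) (hm : 0 < m)
    (H0 S : H →ₗ.[ℂ] H)
    (V : H →L[ℂ] H)
    (hd0S : H0.domain ≤ S.domain)
    -- `V` is symmetric (bounded, hence self-adjoint)
    (hVsym : ∀ x y : H, ⟪V x, y⟫_ℂ = ⟪x, V y⟫_ℂ)
    -- `V H₀^{-1/2}` is compact: a compact operator `Kc` with `Kc ∘ H₀^{1/2} = V` on
    -- `dom H₀^{1/2}`
    (Kc : H →L[ℂ] H) (hKc : IsCompactOperator (⇑Kc))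
    (hKcS : ∀ x : S.domain, Kc (S x) = V (x : H))
    -- `H₀` self-adjoint with `⟨H₀x,x⟩ = ‖H₀^{1/2}x‖²` and `H₀ ≥ m² > 0`
    (hsq : ∀ x : H0.domain, ⟪H0 x, (x : H)⟫_ℂ = ((‖S ⟨(x : H), hd0S x.2⟩‖ ^ 2 : ℝ) : ℂ))
    (hlow : ∀ x : S.domain, m ^ 2 * ‖(x : H)‖ ^ 2 ≤ ‖S x‖ ^ 2)
    -- `λ` is a non-real eigenvalue of the pencil, with eigenfunction `u ≠ 0`
    (lam : ℂ) (hlam : lam.im ≠ 0)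
    (u : H) (hu0 : u ∈ H0.domain) (hu : u ≠ 0)
    (heq : H0 ⟨u, hu0⟩ - V (V u) + (2 * lam) • V u - lam ^ 2 • u = 0) :
    ‖lam‖ ^ 2 ≤ ‖V‖ ^ 2 - m ^ 2 ∧
    ∃ x : H, ‖x‖ = 1 ∧ (lam.re : ℂ) = ⟪V x, x⟫_ℂ := by
  set u'' : S.domain := ⟨u, hd0S hu0⟩ with hu''
  set s : ℝ := ‖S u''‖ ^ 2 with hs
  set b : ℝ := ‖V u‖ ^ 2 with hb
  set n : ℝ := ‖u‖ ^ 2 with hn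
  have hn0 : 0 < n := by
    have := norm_pos_iff.mpr hu
    positivity
  -- A = ⟪V u, u⟫ is real
  set A : ℂ := ⟪V u, u⟫_ℂ with hA
  have hAreal : A = (A.re : ℂ) := by
    have h1 : (starRingEnd ℂ) A = A := by
      rw [hA, inner_conj_symm]
      exact (hVsym u u).symm
    exact (Complex.conj_eq_iff_re.mp h1).symm
  set a : ℝ := A.re with ha
  -- inner product of the eigenvalue equation with u
  have E0 : ⟪H0 ⟨u, hu0⟩ - V (V u) + (2 * lam) • V u - lam ^ 2 • u, u⟫_ℂ = 0 := by
    rw [heq]; exact inner_zero_left u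
  have h1 : ⟪H0 ⟨u, hu0⟩, u⟫_ℂ = (s : ℂ) := hsq ⟨u, hu0⟩
  have h2 : ⟪V (V u), u⟫_ℂ = (b : ℂ) := by
    rw [hVsym, hb]
    simp [inner_self_eq_norm_sq_to_K]
  have h3 : ⟪u, u⟫_ℂ = (n : ℂ) := by
    simp [hn, inner_self_eq_norm_sq_to_K]
  have E : (s : ℂ) - b + (starRingEnd ℂ) (2 * lam) * a - (starRingEnd ℂ) (lam ^ 2) * n = 0 := by
    rw [inner_sub_left, inner_add_left, inner_sub_left, inner_smul_left, inner_smul_left,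
      h1, h2, h3, ← hA, hAreal] at E0
    exact E0
  -- extract real and imaginary parts
  have Eim : (-2 * lam.im) * a + (2 * lam.re * lam.im) * n = 0 := by
    have := congrArg Complex.im E
    simp [Complex.ext_iff, Complex.mul_im, Complex.mul_re, pow_two] at this
    nlinarith [this]
  have Ere : s - b + (2 * lam.re) * a - (lam.re ^ 2 - lam.im ^ 2) * n = 0 := by
    have := congrArg Complex.re E
    simp [Complex.mul_re, Complex.mul_im, pow_two] at this
    nlinarith [this]
  have han : a = lam.re * n := by
    have h' : lam.im * (lam.re * n - a) = 0 := by linear_combination Eim / 2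
    rcases mul_eq_zero.mp h' with h'' | h''
    · exact absurd h'' hlam
    · linarith
  have Ekey : s + (lam.re ^ 2 + lam.im ^ 2) * n = b := by linear_combination Ere - 2 * lam.re * han
  have habs : ‖lam‖ ^ 2 = lam.re ^ 2 + lam.im ^ 2 := by
    rw [Complex.sq_norm, Complex.normSq_apply]; ring
  have hVb : b ≤ ‖V‖ ^ 2 * n := by
    rw [hb, hn]
    calc ‖V u‖ ^ 2 ≤ (‖V‖ * ‖u‖) ^ 2 :=
          pow_le_pow_left₀ (norm_nonneg _) (V.le_opNorm u) 2
      _ = ‖V‖ ^ 2 * ‖u‖ ^ 2 := by ring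
  have hsb : m ^ 2 * n ≤ s := hlow u''
  constructor
  · rw [habs]
    have : (lam.re ^ 2 + lam.im ^ 2) * n ≤ (‖V‖ ^ 2 - m ^ 2) * n := by nlinarith
    exact le_of_mul_le_mul_right (by linarith) hn0
  · refine ⟨(‖u‖ : ℂ)⁻¹ • u, ?_, ?_⟩
    · rw [norm_smul]
      simp [norm_ne_zero_iff.mpr hu]
    · rw [map_smul, inner_smul_left, inner_smul_right, ← hA, hAreal, han]
      have hnu : (‖u‖ : ℝ) ≠ 0 := norm_ne_zero_iff.mpr hu
      have hnu' : ((‖u‖ : ℝ) : ℂ) ≠ 0 := Complex.ofReal_ne_zero.mpr hnu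
      rw [Complex.conj_inv, Complex.conj_ofReal]
      push_cast [hn]
      field_simp
end

section
/- Let V ∈ L¹(ℝ) ∩ L∞(ℝ), m > 0, and suppose λ ∈ ℂ with λ² ∉ [m²,∞) is an eigenvalue of the Klein-Gordon pencil T_V(λ) = −d²/dx² + m² − (V−λ)² on L²(ℝ), i.e. there is a nonzero u ∈ H²(ℝ) with (−u'' + m²u − (V−λ)²u) = 0. Then 4|m²−λ²| ≤ ‖V² − 2λV‖²_{L¹(ℝ)}, and consequently 2|m²−λ²|^{1/2} ≤ ‖V‖²_{L²(ℝ)} + 2|λ|‖V‖_{L¹(ℝ)}. -/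
open MeasureTheory
open Set Filter

lemma aux_bdd (g g' : ℝ → ℂ) (hd : ∀ x, HasDerivAt g (g' x) x)
    (hc' : Continuous g')
    (h2 : MemLp g 2 (volume : Measure ℝ)) (h2' : MemLp g' 2 (volume : Measure ℝ)) :
    ∃ C : ℝ, 0 ≤ C ∧ ∀ x, ‖g x‖ ≤ C := by
  have hc : Continuous g := by
    have : Differentiable ℝ g := fun x => (hd x).differentiableAt
    exact this.continuous
  set h : ℝ → ℝ := fun x => (g x).re ^ 2 + (g x).im ^ 2 with hh
  set h' : ℝ → ℝ := fun x => 2 * (g x).re * (g' x).re + 2 * (g x).im * (g' x).im with hh'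
  have hre : ∀ x, HasDerivAt (fun y => (g y).re) ((g' x).re) x := fun x =>
    (Complex.reCLM.hasFDerivAt.comp_hasDerivAt x (hd x))
  have him : ∀ x, HasDerivAt (fun y => (g y).im) ((g' x).im) x := fun x =>
    (Complex.imCLM.hasFDerivAt.comp_hasDerivAt x (hd x))
  have hdh : ∀ x, HasDerivAt h (h' x) x := by
    intro x
    have h1 := ((hre x).pow 2).add ((him x).pow 2)
    refine h1.congr_deriv ?_
    push_cast
    ring
  have hch' : Continuous h' := by fun_prop
  have hgsq : Integrable (fun x => ‖g x‖ ^ 2) := h2.norm.integrable_sq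
  have hg'sq : Integrable (fun x => ‖g' x‖ ^ 2) := h2'.norm.integrable_sq
  have hh'int : Integrable h' := by
    refine Integrable.mono' ((hgsq.add hg'sq).const_mul 2) hch'.aestronglyMeasurable ?_
    filter_upwards with x
    have h1 : |(g x).re| ≤ ‖g x‖ := Complex.abs_re_le_norm _
    have h2 : |(g x).im| ≤ ‖g x‖ := Complex.abs_im_le_norm _
    have h3 : |(g' x).re| ≤ ‖g' x‖ := Complex.abs_re_le_norm _
    have h4 : |(g' x).im| ≤ ‖g' x‖ := Complex.abs_im_le_norm _
    have hb : ‖h' x‖ ≤ 2 * ‖g x‖ * ‖g' x‖ + 2 * ‖g x‖ * ‖g' x‖ := by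
      calc ‖h' x‖ ≤ ‖2 * (g x).re * (g' x).re‖ + ‖2 * (g x).im * (g' x).im‖ := norm_add_le _ _
        _ ≤ 2 * ‖g x‖ * ‖g' x‖ + 2 * ‖g x‖ * ‖g' x‖ := by
            rw [Real.norm_eq_abs, Real.norm_eq_abs, abs_mul, abs_mul, abs_mul, abs_mul]
            gcongr <;> simp [h1, h2, h3, h4, abs_of_nonneg]
    refine hb.trans ?_
    have h5 : ‖g x‖ * ‖g' x‖ ≤ (‖g x‖ ^ 2 + ‖g' x‖ ^ 2) / 2 := by nlinarith [sq_nonneg (‖g x‖ - ‖g' x‖)]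
    simp only [Pi.add_apply]
    nlinarith
  set I : ℝ := ∫ x, |h' x| with hI
  have hI0 : 0 ≤ I := integral_nonneg fun x => abs_nonneg _
  have hbd : ∀ x, h x ≤ h 0 + I := by
    intro x
    have hftc : ∫ t in (0:ℝ)..x, h' t = h x - h 0 :=
      intervalIntegral.integral_eq_sub_of_hasDerivAt (fun t _ => hdh t)
        (hch'.intervalIntegrable 0 x)
    have habs : |∫ t in (0:ℝ)..x, h' t| ≤ I := by
      rw [← Real.norm_eq_abs]
      refine (intervalIntegral.norm_integral_le_integral_norm_uIoc (a := 0) (b := x)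
        (f := h') (μ := volume)).trans ?_
      have : ∫ t in Set.uIoc 0 x, ‖h' t‖ ≤ I := by
        refine setIntegral_le_integral hh'int.abs ?_
        filter_upwards with t using abs_nonneg _
      simpa using this
    have := habs
    rw [hftc] at this
    have := abs_le.mp this
    linarith [this.1, this.2]
  refine ⟨Real.sqrt (h 0 + I), Real.sqrt_nonneg _, fun x => ?_⟩
  have hx : ‖g x‖ ^ 2 = h x := by
    have h9 : ‖g x‖ ^ 2 = Complex.normSq (g x) := by
      rw [Complex.sq_norm]
    rw [h9, Complex.normSq_apply, hh]; ring
  have : ‖g x‖ ^ 2 ≤ h 0 + I := by rw [hx]; exact hbd x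
  calc ‖g x‖ = Real.sqrt (‖g x‖ ^ 2) := (Real.sqrt_sq (norm_nonneg _)).symm
    _ ≤ Real.sqrt (h 0 + I) := Real.sqrt_le_sqrt this


lemma aux_sqrt (m : ℝ) (lam : ℂ)
    (hlam : lam ^ 2 ∉ {z : ℂ | ∃ t : ℝ, m ^ 2 ≤ t ∧ z = (t : ℂ)}) :
    ∃ k : ℂ, k ^ 2 = (m : ℂ) ^ 2 - lam ^ 2 ∧ 0 < k.re := by

  set z : ℂ := (m : ℂ) ^ 2 - lam ^ 2 with hz
  have hz0 : z ≠ 0 := by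
    intro h
    apply hlam
    refine ⟨m ^ 2, le_refl _, ?_⟩
    have : lam ^ 2 = (m : ℂ) ^ 2 := by rw [hz] at h; linear_combination -h
    rw [this]; push_cast; ring
  set w : ℂ := Complex.exp (Complex.log z / 2) with hw
  have hw2 : w ^ 2 = z := by
    have h2 : Complex.log z / 2 + Complex.log z / 2 = Complex.log z := by ring
    rw [hw, pow_two, ← Complex.exp_add, h2]
    exact Complex.exp_log hz0
  have hwre : w.re ≠ 0 := by
    intro h0
    apply hlam
    refine ⟨m ^ 2 + w.im ^ 2, by nlinarith [sq_nonneg w.im], ?_⟩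
    have hwi : w = w.im * Complex.I := by
      rw [← Complex.re_add_im w, h0]; simp
    have : z = -(w.im ^ 2 : ℝ) := by
      rw [← hw2]
      conv_lhs => rw [hwi]
      rw [mul_pow, Complex.I_sq]; push_cast; ring
    have hl : lam ^ 2 = (m : ℂ) ^ 2 + (w.im ^ 2 : ℝ) := by
      rw [hz] at this; linear_combination -this
    rw [hl]; push_cast; ring
  rcases lt_or_gt_of_ne hwre with h | h
  · exact ⟨-w, by rw [neg_pow]; simp [hw2], by simpa using h⟩
  · exact ⟨w, hw2, h⟩


lemma green_id (k : ℂ) (hkre : 0 < k.re) (u f : ℝ → ℂ)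
    (hd1 : ∀ x, HasDerivAt u (deriv u x) x)
    (hd2 : ∀ x, HasDerivAt (deriv u) (deriv (deriv u) x) x)
    (hODE : ∀ x, deriv (deriv u) x = k ^ 2 * u x - f x)
    (hfint : Integrable f)
    (Cu Cu' : ℝ) (hCu : ∀ x, ‖u x‖ ≤ Cu) (hCu' : ∀ x, ‖deriv u x‖ ≤ Cu')
    (p : ℝ) :
    ∫ y : ℝ, Complex.exp (-(k * ((|y - p| : ℝ) : ℂ))) * f y = 2 * k * u p := by
  set E : ℝ → ℂ := fun y => Complex.exp (-(k * ((y : ℂ) - (p : ℂ)))) with hEdef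
  set E₂ : ℝ → ℂ := fun y => Complex.exp (k * ((y : ℂ) - (p : ℂ))) with hE2def
  have hE : ∀ y : ℝ, HasDerivAt E (-k * E y) y := by
    intro y
    have hin : HasDerivAt (fun z : ℂ => -(k * (z - (p : ℂ)))) (-k) (y : ℂ) := by
      have h0 := (((hasDerivAt_id ((y : ℂ))).sub_const (p : ℂ)).const_mul k).neg
      simp only [id, mul_one] at h0
      exact h0
    have h1 := hin.cexp
    have h2 := h1.comp_ofReal
    simpa [hEdef, mul_comm] using h2
  have hE2 : ∀ y : ℝ, HasDerivAt E₂ (k * E₂ y) y := by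
    intro y
    have hin : HasDerivAt (fun z : ℂ => k * (z - (p : ℂ))) k (y : ℂ) := by
      simpa using (((hasDerivAt_id ((y : ℂ))).sub_const (p : ℂ)).const_mul k)
    have h2 := hin.cexp.comp_ofReal
    simpa [hE2def, mul_comm] using h2
  have hnE : ∀ y : ℝ, ‖E y‖ = Real.exp (-(k.re * (y - p))) := by
    intro y
    rw [hEdef]
    simp only [Complex.norm_exp]
    congr 1
    simp [Complex.mul_re]
  have hnE2 : ∀ y : ℝ, ‖E₂ y‖ = Real.exp (k.re * (y - p)) := by
    intro y
    rw [hE2def]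
    simp only [Complex.norm_exp]
    congr 1
    simp [Complex.mul_re]
  have hEcont : Continuous E := by fun_prop
  have hE2cont : Continuous E₂ := by fun_prop
  -- gp and its derivative
  set gp : ℝ → ℂ := fun y => -(k * (E y * u y)) - E y * deriv u y with hgp
  have hdgp : ∀ y, HasDerivAt gp (E y * f y) y := by
    intro y
    have h1 := (((hE y).mul (hd1 y)).const_mul k).neg.sub ((hE y).mul (hd2 y))
    refine h1.congr_deriv ?_
    rw [hODE y]
    ring
  set gm : ℝ → ℂ := fun y => k * (E₂ y * u y) - E₂ y * deriv u y with hgm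
  have hdgm : ∀ y, HasDerivAt gm (E₂ y * f y) y := by
    intro y
    have h1 := (((hE2 y).mul (hd1 y)).const_mul k).sub ((hE2 y).mul (hd2 y))
    refine h1.congr_deriv ?_
    rw [hODE y]
    ring
  -- limits
  have hCu0 : 0 ≤ Cu := (norm_nonneg _).trans (hCu 0)
  have hCu'0 : 0 ≤ Cu' := (norm_nonneg _).trans (hCu' 0)
  have hbound : ∀ y, ‖gp y‖ ≤ (‖k‖ * Cu + Cu') * Real.exp (-(k.re * (y - p))) := by
    intro y
    have h1 : ‖gp y‖ ≤ ‖k‖ * (‖E y‖ * ‖u y‖) + ‖E y‖ * ‖deriv u y‖ := by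
      refine (norm_sub_le _ _).trans ?_
      rw [norm_neg, norm_mul, norm_mul, norm_mul]
    refine h1.trans ?_
    rw [hnE y]
    have he : (0:ℝ) ≤ Real.exp (-(k.re * (y - p))) := (Real.exp_pos _).le
    nlinarith [mul_le_mul_of_nonneg_left (hCu y) (mul_nonneg (norm_nonneg k) he),
      mul_le_mul_of_nonneg_left (hCu' y) he, norm_nonneg (u y), norm_nonneg (deriv u y),
      norm_nonneg k]
  have hbound2 : ∀ y, ‖gm y‖ ≤ (‖k‖ * Cu + Cu') * Real.exp (k.re * (y - p)) := by
    intro y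
    have h1 : ‖gm y‖ ≤ ‖k‖ * (‖E₂ y‖ * ‖u y‖) + ‖E₂ y‖ * ‖deriv u y‖ := by
      refine (norm_sub_le _ _).trans ?_
      rw [norm_mul, norm_mul, norm_mul]
    refine h1.trans ?_
    rw [hnE2 y]
    have he : (0:ℝ) ≤ Real.exp (k.re * (y - p)) := (Real.exp_pos _).le
    nlinarith [mul_le_mul_of_nonneg_left (hCu y) (mul_nonneg (norm_nonneg k) he),
      mul_le_mul_of_nonneg_left (hCu' y) he, norm_nonneg (u y), norm_nonneg (deriv u y),
      norm_nonneg k]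
  have hlim : Tendsto gp atTop (nhds 0) := by
    apply squeeze_zero_norm hbound
    have t1 : Tendsto (fun y : ℝ => y - p) atTop atTop := tendsto_atTop_add_const_right _ (-p) tendsto_id
    have t2 : Tendsto (fun y : ℝ => k.re * (y - p)) atTop atTop := t1.const_mul_atTop hkre
    have t3 : Tendsto (fun y : ℝ => -(k.re * (y - p))) atTop atBot := tendsto_neg_atBot_iff.mpr t2
    have t4 : Tendsto (fun y : ℝ => Real.exp (-(k.re * (y - p)))) atTop (nhds 0) :=
      Real.tendsto_exp_atBot.comp t3
    simpa using t4.const_mul (‖k‖ * Cu + Cu')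
  have hlim2 : Tendsto gm atBot (nhds 0) := by
    apply squeeze_zero_norm hbound2
    have t1 : Tendsto (fun y : ℝ => y - p) atBot atBot := tendsto_atBot_add_const_right _ (-p) tendsto_id
    have t2 : Tendsto (fun y : ℝ => k.re * (y - p)) atBot atBot := by
      exact Tendsto.const_mul_atBot hkre t1
    have t4 : Tendsto (fun y : ℝ => Real.exp (k.re * (y - p))) atBot (nhds 0) :=
      Real.tendsto_exp_atBot.comp t2
    simpa using t4.const_mul (‖k‖ * Cu + Cu')
  -- integrability
  have hIoiInt : IntegrableOn (fun y => E y * f y) (Ioi p) := by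
    refine Integrable.mono' (hfint.norm.integrableOn) ((hEcont.aestronglyMeasurable.mul hfint.1).restrict) ?_
    rw [ae_restrict_iff' measurableSet_Ioi]
    filter_upwards with y hy
    rw [norm_mul, hnE y]
    have : Real.exp (-(k.re * (y - p))) ≤ 1 := by
      apply Real.exp_le_one_iff.mpr
      have : 0 ≤ y - p := le_of_lt (sub_pos.mpr hy)
      nlinarith [hkre.le]
    nlinarith [norm_nonneg (f y), (Real.exp_pos (-(k.re * (y - p)))).le]
  have hIicInt : IntegrableOn (fun y => E₂ y * f y) (Iic p) := by
    refine Integrable.mono' (hfint.norm.integrableOn) ((hE2cont.aestronglyMeasurable.mul hfint.1).restrict) ?_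
    rw [ae_restrict_iff' measurableSet_Iic]
    filter_upwards with y hy
    rw [norm_mul, hnE2 y]
    have : Real.exp (k.re * (y - p)) ≤ 1 := by
      apply Real.exp_le_one_iff.mpr
      have : y - p ≤ 0 := sub_nonpos.mpr hy
      nlinarith [hkre.le]
    nlinarith [norm_nonneg (f y), (Real.exp_pos (k.re * (y - p))).le]
  -- FTC on half lines
  have hIoi : ∫ y in Ioi p, E y * f y = k * u p + deriv u p := by
    have h := integral_Ioi_of_hasDerivAt_of_tendsto' (fun x _ => hdgp x) hIoiInt hlim
    rw [h, hgp]
    have hEp : E p = 1 := by rw [hEdef]; simp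
    simp only [hEp]
    ring
  have hIic : ∫ y in Iic p, E₂ y * f y = k * u p - deriv u p := by
    have h := integral_Iic_of_hasDerivAt_of_tendsto' (fun x _ => hdgm x) hIicInt hlim2
    rw [h, hgm]
    have hEp : E₂ p = 1 := by rw [hE2def]; simp
    simp only [hEp]
    ring
  -- combine
  have hKIoi : EqOn (fun y : ℝ => Complex.exp (-(k * ((|y - p| : ℝ) : ℂ))) * f y)
      (fun y => E y * f y) (Ioi p) := by
    intro y hy
    have : |y - p| = y - p := abs_of_pos (sub_pos.mpr hy)
    simp only [this, hEdef]
    push_cast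
    ring_nf
  have hKIic : EqOn (fun y : ℝ => Complex.exp (-(k * ((|y - p| : ℝ) : ℂ))) * f y)
      (fun y => E₂ y * f y) (Iic p) := by
    intro y hy
    have h1 : |y - p| = -(y - p) := abs_of_nonpos (sub_nonpos.mpr hy)
    have h2 : (-(k * ((|y - p| : ℝ) : ℂ))) = k * ((y : ℂ) - (p : ℂ)) := by
      rw [h1]; push_cast; ring
    simp only [h2, hE2def]
  have hI1 : IntegrableOn (fun y : ℝ => Complex.exp (-(k * ((|y - p| : ℝ) : ℂ))) * f y) (Ioi p) :=
    hIoiInt.congr_fun hKIoi.symm measurableSet_Ioi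
  have hI2 : IntegrableOn (fun y : ℝ => Complex.exp (-(k * ((|y - p| : ℝ) : ℂ))) * f y) (Iic p) :=
    hIicInt.congr_fun hKIic.symm measurableSet_Iic
  rw [← intervalIntegral.integral_Iic_add_Ioi hI2 hI1,
    setIntegral_congr_fun measurableSet_Ioi hKIoi,
    setIntegral_congr_fun measurableSet_Iic hKIic, hIoi, hIic]
  ring



/-- Birman–Schwinger bound for eigenvalues of the one-dimensional
Klein-Gordon pencil `T_V(λ) = −d²/dx² + m² − (V−λ)²`:
`4|m²−λ²| ≤ ‖V²−2λV‖²_{L¹}` and `2|m²−λ²|^{1/2} ≤ ‖V‖²_{L²} + 2|λ|‖V‖_{L¹}`. -/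
theorem stmt14 (m : ℝ) (hm : 0 < m)
    (V : ℝ → ℝ)
    (hV1 : Integrable V) (hVinf : MemLp V ⊤ (volume : Measure ℝ))
    (lam : ℂ)
    (hlam : lam ^ 2 ∉ {z : ℂ | ∃ t : ℝ, m ^ 2 ≤ t ∧ z = (t : ℂ)})
    (u : ℝ → ℂ) (hu : u ≠ 0)
    (huC2 : ContDiff ℝ 2 u)
    (huL2 : MemLp u 2 (volume : Measure ℝ))
    (hu'L2 : MemLp (deriv u) 2 (volume : Measure ℝ))
    (hu''L2 : MemLp (deriv (deriv u)) 2 (volume : Measure ℝ))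
    -- the eigenvalue equation `−u'' + m²u − (V−λ)²u = 0`
    (heq : ∀ x : ℝ,
      -(deriv (deriv u) x) + (m : ℂ) ^ 2 * u x - ((V x : ℂ) - lam) ^ 2 * u x = 0) :
    4 * ‖(m : ℂ) ^ 2 - lam ^ 2‖ ≤
      (∫ x : ℝ, ‖(V x : ℂ) ^ 2 - 2 * lam * (V x : ℂ)‖) ^ 2 ∧
    2 * Real.sqrt (‖(m : ℂ) ^ 2 - lam ^ 2‖) ≤
      (∫ x : ℝ, (V x) ^ 2) + 2 * ‖lam‖ * ∫ x : ℝ, |V x| := by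
  obtain ⟨k, hk2, hkre⟩ := aux_sqrt m lam hlam
  have hk0 : k ≠ 0 := by
    intro h
    rw [h] at hkre
    simp at hkre
  -- smoothness facts
  have hdiff := contDiff_succ_iff_deriv.mp
    (show ContDiff ℝ ((1 : ℕ) + 1) u from by exact_mod_cast huC2)
  have hu_diff : Differentiable ℝ u := hdiff.1
  have hu'C1 : ContDiff ℝ 1 (deriv u) := hdiff.2.2
  have hd1 : ∀ x, HasDerivAt u (deriv u x) x := fun x => (hu_diff x).hasDerivAt
  have hd2 : ∀ x, HasDerivAt (deriv u) (deriv (deriv u) x) x :=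
    fun x => ((hu'C1.differentiable one_ne_zero) x).hasDerivAt
  have hu''_cont : Continuous (deriv (deriv u)) := hu'C1.continuous_deriv le_rfl
  have hu'_cont : Continuous (deriv u) := hu'C1.continuous
  have hu_cont : Continuous u := huC2.continuous
  -- bounds
  obtain ⟨Cu, hCu0, hCu⟩ := aux_bdd u (deriv u) hd1 hu'_cont huL2 hu'L2
  obtain ⟨Cu', hCu'0, hCu'⟩ := aux_bdd (deriv u) (deriv (deriv u)) hd2 hu''_cont hu'L2 hu''L2
  -- the potential W and rhs f
  have hODE : ∀ x, deriv (deriv u) x =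
      k ^ 2 * u x - (((V x : ℂ) ^ 2 - 2 * lam * (V x : ℂ)) * u x) := by
    intro x
    rw [hk2]
    linear_combination -heq x
  -- a.e. bound on V
  obtain ⟨CV, hVb⟩ : ∃ CV : ℝ, ∀ᵐ x : ℝ, |V x| ≤ CV := by
    refine ⟨(eLpNormEssSup V volume).toReal, ?_⟩
    have h1 := enorm_ae_le_eLpNormEssSup V (volume : Measure ℝ)
    have hfin : eLpNormEssSup V volume ≠ ⊤ := by
      have := hVinf.2
      rwa [eLpNorm_exponent_top, lt_top_iff_ne_top] at this
    filter_upwards [h1] with x hx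
    have := ENNReal.toReal_mono hfin hx
    simpa using this
  -- integrability
  have hV2int : Integrable (fun x => (V x) ^ 2) := by
    have hmeas : AEStronglyMeasurable (fun x => (V x) ^ 2) (volume : Measure ℝ) := by
      have := hV1.1.mul hV1.1
      exact hV1.1.pow 2
    refine Integrable.mono' (hV1.norm.const_mul CV) hmeas ?_
    filter_upwards [hVb] with x hx
    have h0 : (0:ℝ) ≤ |V x| := abs_nonneg _
    have : ‖(V x) ^ 2‖ = |V x| * |V x| := by
      rw [Real.norm_eq_abs, abs_pow, sq]
    rw [this, Real.norm_eq_abs]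
    nlinarith
  have hWint : Integrable (fun x => (V x : ℂ) ^ 2 - 2 * lam * (V x : ℂ)) := by
    have h1 : Integrable (fun x => ((V x ^ 2 : ℝ) : ℂ)) := hV2int.ofReal
    have h2 : Integrable (fun x => (2 * lam) * ((V x : ℝ) : ℂ)) := (hV1.ofReal).const_mul _
    refine (h1.sub h2).congr (ae_of_all _ fun x => ?_)
    simp only [Pi.sub_apply]
    push_cast
    ring
  have hfint : Integrable (fun x => ((V x : ℂ) ^ 2 - 2 * lam * (V x : ℂ)) * u x) := by
    have h1 : Integrable (fun x => u x * ((V x : ℂ) ^ 2 - 2 * lam * (V x : ℂ))) :=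
      hWint.bdd_mul hu_cont.aestronglyMeasurable (ae_of_all _ hCu)
    exact h1.congr (ae_of_all _ fun x => by simp only []; ring)
  -- supremum of ‖u‖
  have hrange : BddAbove (range fun x : ℝ => ‖u x‖) := ⟨Cu, by rintro _ ⟨x, rfl⟩; exact hCu x⟩
  set M := ⨆ x : ℝ, ‖u x‖ with hM
  have hMle : ∀ x, ‖u x‖ ≤ M := fun x => le_ciSup hrange x
  have hMpos : 0 < M := by
    obtain ⟨x0, hx0⟩ := Function.ne_iff.mp hu
    exact lt_of_lt_of_le (norm_pos_iff.mpr hx0) (hMle x0)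
  set S := ∫ x : ℝ, ‖(V x : ℂ) ^ 2 - 2 * lam * (V x : ℂ)‖ with hS
  have hS0 : 0 ≤ S := integral_nonneg fun x => norm_nonneg _
  -- the key bound from the Green identity
  have hkey : ∀ p : ℝ, 2 * ‖k‖ * ‖u p‖ ≤ S * M := by
    intro p
    have hg := green_id k hkre u (fun x => ((V x : ℂ) ^ 2 - 2 * lam * (V x : ℂ)) * u x)
      hd1 hd2 hODE hfint Cu Cu' hCu hCu' p
    have h1 : ‖∫ y : ℝ, Complex.exp (-(k * ((|y - p| : ℝ) : ℂ))) *
        (((V y : ℂ) ^ 2 - 2 * lam * (V y : ℂ)) * u y)‖ ≤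
        ∫ y : ℝ, ‖(V y : ℂ) ^ 2 - 2 * lam * (V y : ℂ)‖ * M := by
      refine norm_integral_le_of_norm_le (hWint.norm.mul_const M) (ae_of_all _ fun y => ?_)
      rw [norm_mul, norm_mul]
      have hE1 : ‖Complex.exp (-(k * ((|y - p| : ℝ) : ℂ)))‖ ≤ 1 := by
        rw [Complex.norm_exp]
        apply Real.exp_le_one_iff.mpr
        have hre : (-(k * ((|y - p| : ℝ) : ℂ))).re = -(k.re * |y - p|) := by
          simp [Complex.mul_re]
        rw [hre, neg_nonpos]
        exact mul_nonneg hkre.le (abs_nonneg _)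
      have h2 := hMle y
      have hWn : (0:ℝ) ≤ ‖(V y : ℂ) ^ 2 - 2 * lam * (V y : ℂ)‖ := norm_nonneg _
      have hun : (0:ℝ) ≤ ‖u y‖ := norm_nonneg _
      have hEn : (0:ℝ) ≤ ‖Complex.exp (-(k * ((|y - p| : ℝ) : ℂ)))‖ := norm_nonneg _
      nlinarith [mul_le_mul_of_nonneg_right hE1 (mul_nonneg hWn hun),
        mul_le_mul_of_nonneg_left h2 hWn]
    rw [hg] at h1
    have h2 : ‖(2 : ℂ) * k * u p‖ = 2 * ‖k‖ * ‖u p‖ := by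
      rw [norm_mul, norm_mul]
      norm_num
    have h3 : ∫ y : ℝ, ‖(V y : ℂ) ^ 2 - 2 * lam * (V y : ℂ)‖ * M = S * M :=
      integral_mul_const M _
    rw [h2, h3] at h1
    exact h1
  have hknorm : 0 < ‖k‖ := norm_pos_iff.mpr hk0
  have hkS : 2 * ‖k‖ ≤ S := by
    have h4 : ∀ p : ℝ, ‖u p‖ ≤ (S * M) / (2 * ‖k‖) := fun p => by
      rw [le_div_iff₀ (by positivity)]
      have := hkey p
      nlinarith
    have h5 : M ≤ (S * M) / (2 * ‖k‖) := ciSup_le h4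
    rw [le_div_iff₀ (by positivity)] at h5
    nlinarith
  -- conclusions
  have habs : ‖(m : ℂ) ^ 2 - lam ^ 2‖ = ‖k‖ ^ 2 := by
    rw [← hk2, norm_pow]
  constructor
  · have h7 : (∫ x : ℝ, ‖(V x : ℂ) ^ 2 - 2 * lam * (V x : ℂ)‖) = S := by
      rw [hS]
    rw [habs]
    nlinarith
  · have hsqrt : Real.sqrt (‖(m : ℂ) ^ 2 - lam ^ 2‖) = ‖k‖ := by
      rw [habs, Real.sqrt_sq (norm_nonneg k)]
    rw [hsqrt]
    have hintRHS : Integrable (fun x => 2 * ‖lam‖ * |V x|) := (hV1.abs).const_mul _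
    have h8 : S ≤ ∫ x : ℝ, ((V x) ^ 2 + 2 * ‖lam‖ * |V x|) := by
      refine integral_mono hWint.norm (hV2int.add hintRHS) fun x => ?_
      calc ‖(V x : ℂ) ^ 2 - 2 * lam * (V x : ℂ)‖
          ≤ ‖(V x : ℂ) ^ 2‖ + ‖2 * lam * (V x : ℂ)‖ := norm_sub_le _ _
        _ = (V x) ^ 2 + 2 * ‖lam‖ * |V x| := by
            rw [norm_pow, norm_mul, norm_mul, Complex.norm_real]
            simp [Real.norm_eq_abs, sq_abs]
    rw [integral_add hV2int hintRHS] at h8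
    have h9 : ∫ x : ℝ, 2 * ‖lam‖ * |V x| = 2 * ‖lam‖ * ∫ x : ℝ, |V x| := by
      simp_rw [mul_assoc]
      rw [integral_const_mul, integral_const_mul]
    rw [h9] at h8
    linarith
end

section
/- Let v₀ > 0, m > 0, a > 0, and consider the square well potential V = −v₀·χ_{[−a,a]} on ℝ. If λ ∈ ℂ with (−v₀−λ)² − m² ∉ (−∞,0] and m² − λ² ∉ (−∞,0], and λ is an eigenvalue of the pencil T_V(λ) = −d²/dx² + m² − (V−λ)² (i.e. there exists nonzero u ∈ H²(ℝ) with T_V(λ)u = 0), then 2·cot(2a·√((v₀+λ)²−m²)) = √((v₀+λ)²−m²)/√(m²−λ²) − √(m²−λ²)/√((v₀+λ)²−m²). -/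
open MeasureTheory

open Filter Set

lemma aux_sqrt_sq {z : ℂ} (hz : z ≠ 0) : (z ^ (1/2 : ℂ))^2 = z := by
  rw [sq, ← Complex.cpow_add _ _ hz]
  norm_num

lemma aux_re_sqrt_pos {z : ℂ} (hz : z ∉ {w : ℂ | ∃ t : ℝ, t ≤ 0 ∧ w = (t : ℂ)}) :
    0 < (z ^ (1/2 : ℂ)).re := by
  have hz0 : z ≠ 0 := by
    rintro rfl; exact hz ⟨0, le_refl 0, by simp⟩
  have harg : Complex.arg z ≠ Real.pi := by
    intro h
    rw [Complex.arg_eq_pi_iff] at h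
    exact hz ⟨z.re, h.1.le, by rw [Complex.ext_iff]; simp [h.2]⟩
  rw [Complex.cpow_def_of_ne_zero hz0]
  rw [Complex.exp_re]
  apply mul_pos (Real.exp_pos _)
  have him : (Complex.log z * (1/2 : ℂ)).im = Complex.arg z / 2 := by
    simp [Complex.mul_im, Complex.log_im]
    ring
  rw [him]
  apply Real.cos_pos_of_mem_Ioo
  constructor
  · have := Complex.neg_pi_lt_arg z; linarith
  · have h := Complex.arg_le_pi z
    have : Complex.arg z < Real.pi := lt_of_le_of_ne h harg
    linarith

lemma aux_hasDerivAt_cexp (μ : ℂ) (x : ℝ) :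
    HasDerivAt (fun y : ℝ => Complex.exp (μ * y)) (μ * Complex.exp (μ * x)) x := by
  have hg : HasDerivAt (fun z : ℂ => μ * z) μ (x : ℂ) := by
    simpa using (hasDerivAt_id (x : ℂ)).const_mul μ
  have h1 := (Complex.hasDerivAt_exp (μ * (x : ℂ))).comp (x : ℂ) hg
  simpa [mul_comm] using h1.comp_ofReal

lemma aux_const_of_linODE {μ : ℂ} {w : ℝ → ℂ} (hw : Continuous w) {s : Set ℝ}
    (hc : Convex ℝ s) (hd : ∀ x ∈ s, HasDerivAt w (μ * w x) x) :
    ∀ x ∈ closure s, ∀ y ∈ closure s,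
      w x * Complex.exp (-μ * x) = w y * Complex.exp (-μ * y) := by
  set g : ℝ → ℂ := fun x => w x * Complex.exp (-μ * x) with hg
  have hgc : Continuous g := by
    apply hw.mul
    exact Complex.continuous_exp.comp (by continuity)
  have hgd : ∀ x ∈ s, HasDerivAt g 0 x := by
    intro x hx
    have h1 : HasDerivAt g (μ * w x * Complex.exp (-μ * x) + w x * (-μ * Complex.exp (-μ * x))) x :=
      (hd x hx).mul (aux_hasDerivAt_cexp (-μ) x)
    convert h1 using 1
    ring
  have step : ∀ x ∈ s, ∀ y ∈ s, g x = g y := by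
    have mono : ∀ x ∈ s, ∀ y ∈ s, x ≤ y → g y = g x := by
      intro x hx y hy hxy
      have hsub : Set.Icc x y ⊆ s := hc.ordConnected.out hx hy
      have h2 := constant_of_has_deriv_right_zero (f := g) (a := x) (b := y)
        (hgc.continuousOn)
        (fun t ht => (hgd t (hsub ⟨ht.1, ht.2.le⟩)).hasDerivWithinAt)
      exact h2 y (Set.right_mem_Icc.2 hxy)
    intro x hx y hy
    rcases le_total x y with h | h
    · exact (mono x hx y hy h).symm
    · exact mono y hy x hx h
  rcases Set.eq_empty_or_nonempty s with rfl | ⟨x₀, hx₀⟩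
  · simp
  · intro x hx y hy
    have h1 : Set.EqOn g (fun _ => g x₀) (closure s) :=
      Set.EqOn.closure (fun z hz => step z hz x₀ hx₀) hgc continuous_const
    show g x = g y
    rw [h1 hx, h1 hy]

lemma aux_notL2_atTop {u : ℝ → ℂ} (huL2 : MemLp u 2 (volume : Measure ℝ))
    (h : Tendsto (fun x => ‖u x‖) atTop atTop) : False := by
  have hme := huL2.meas_ge_lt_top (by norm_num) (by norm_num) (ε := 1) one_ne_zero
  have h1 := h.eventually_ge_atTop 1
  rw [Filter.eventually_atTop] at h1
  obtain ⟨R, hR⟩ := h1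
  have hsub : Set.Ici R ⊆ {x | (1 : NNReal) ≤ ‖u x‖₊} := by
    intro x hx
    have := hR x hx
    simp only [Set.mem_setOf_eq, ← NNReal.coe_le_coe, coe_nnnorm, NNReal.coe_one]
    exact this
  have h2 := measure_mono (μ := (volume : Measure ℝ)) hsub
  rw [Real.volume_Ici] at h2
  exact lt_irrefl _ (h2.trans_lt hme)

lemma aux_notL2_atBot {u : ℝ → ℂ} (huL2 : MemLp u 2 (volume : Measure ℝ))
    (h : Tendsto (fun x => ‖u x‖) atBot atTop) : False := by
  have hme := huL2.meas_ge_lt_top (by norm_num) (by norm_num) (ε := 1) one_ne_zero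
  have h1 := h.eventually_ge_atTop 1
  rw [Filter.eventually_atBot] at h1
  obtain ⟨R, hR⟩ := h1
  have hsub : Set.Iic R ⊆ {x | (1 : NNReal) ≤ ‖u x‖₊} := by
    intro x hx
    have := hR x hx
    simp only [Set.mem_setOf_eq, ← NNReal.coe_le_coe, coe_nnnorm, NNReal.coe_one]
    exact this
  have h2 := measure_mono (μ := (volume : Measure ℝ)) hsub
  rw [Real.volume_Iic] at h2
  exact lt_irrefl _ (h2.trans_lt hme)

lemma aux_norm_lower {c c₂ κ : ℂ} {u : ℝ → ℂ} (x : ℝ)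
    (h2 : 2 * κ * u x = c * Complex.exp (κ * x) - c₂ * Complex.exp (-κ * x)) :
    ‖c‖ * Real.exp (κ.re * x) - ‖c₂‖ * Real.exp (-(κ.re * x)) ≤ ‖(2:ℂ)*κ‖ * ‖u x‖ := by
  have hre1 : (κ * (x : ℂ)).re = κ.re * x := by simp [Complex.mul_re]
  have hre2 : (-κ * (x : ℂ)).re = -(κ.re * x) := by simp [Complex.mul_re]
  have hb := norm_sub_norm_le (c * Complex.exp (κ * x)) (c₂ * Complex.exp (-κ * x))
  rw [← norm_mul, h2]
  calc ‖c‖ * Real.exp (κ.re * x) - ‖c₂‖ * Real.exp (-(κ.re * x))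
      = ‖c * Complex.exp (κ * x)‖ - ‖c₂ * Complex.exp (-κ * x)‖ := by
        simp [norm_mul, Complex.norm_exp, hre1, hre2]
    _ ≤ _ := hb

lemma aux_blowup_atTop {c c₂ κ : ℂ} {u : ℝ → ℂ} (hc : c ≠ 0) (hr : 0 < κ.re) (R : ℝ)
    (hform : ∀ x : ℝ, R ≤ x →
      2 * κ * u x = c * Complex.exp (κ * x) - c₂ * Complex.exp (-κ * x)) :
    Tendsto (fun x => ‖u x‖) atTop atTop := by
  have hκ0 : ((2:ℂ)*κ) ≠ 0 := by
    refine mul_ne_zero two_ne_zero fun h => ?_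
    rw [h] at hr; simp at hr
  have hnorm : 0 < ‖(2:ℂ)*κ‖ := norm_pos_iff.2 hκ0
  have hmul : Tendsto (fun x : ℝ => κ.re * x) atTop atTop :=
    tendsto_id.const_mul_atTop hr
  have h1 : Tendsto (fun x : ℝ => ‖c‖ * Real.exp (κ.re * x)) atTop atTop :=
    (Real.tendsto_exp_atTop.comp hmul).const_mul_atTop (norm_pos_iff.2 hc)
  have h2 : Tendsto (fun x : ℝ => -(‖c₂‖ * Real.exp (-(κ.re * x)))) atTop (nhds (-(‖c₂‖ * 0))) := by
    apply Tendsto.neg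
    apply Tendsto.const_mul
    exact Real.tendsto_exp_atBot.comp (tendsto_neg_atTop_atBot.comp hmul)
  have hf : Tendsto (fun x : ℝ =>
      (‖c‖ * Real.exp (κ.re * x) - ‖c₂‖ * Real.exp (-(κ.re * x))) / ‖(2:ℂ)*κ‖) atTop atTop := by
    apply Tendsto.atTop_div_const hnorm
    have := h1.atTop_add h2
    simpa [sub_eq_add_neg] using this
  apply Filter.tendsto_atTop_mono' _ _ hf
  filter_upwards [Filter.eventually_ge_atTop R] with x hx
  rw [div_le_iff₀ hnorm]
  rw [mul_comm ‖u x‖]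
  exact aux_norm_lower x (hform x hx)

lemma aux_blowup_atBot {c c₂ κ : ℂ} {u : ℝ → ℂ} (hc₂ : c₂ ≠ 0) (hr : 0 < κ.re) (R : ℝ)
    (hform : ∀ x : ℝ, x ≤ R →
      2 * κ * u x = c * Complex.exp (κ * x) - c₂ * Complex.exp (-κ * x)) :
    Tendsto (fun x => ‖u x‖) atBot atTop := by
  have hκ0 : ((2:ℂ)*κ) ≠ 0 := by
    refine mul_ne_zero two_ne_zero fun h => ?_
    rw [h] at hr; simp at hr
  have hnorm : 0 < ‖(2:ℂ)*κ‖ := norm_pos_iff.2 hκ0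
  have hmul : Tendsto (fun x : ℝ => κ.re * x) atBot atBot :=
    tendsto_id.const_mul_atBot hr
  have h1 : Tendsto (fun x : ℝ => ‖c₂‖ * Real.exp (-(κ.re * x))) atBot atTop :=
    (Real.tendsto_exp_atTop.comp (tendsto_neg_atBot_atTop.comp hmul)).const_mul_atTop
      (norm_pos_iff.2 hc₂)
  have h2 : Tendsto (fun x : ℝ => ‖c‖ * Real.exp (κ.re * x)) atBot (nhds (‖c‖ * 0)) := by
    apply Tendsto.const_mul
    exact Real.tendsto_exp_atBot.comp hmul
  have hf : Tendsto (fun x : ℝ =>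
      (‖c₂‖ * Real.exp (-(κ.re * x)) - ‖c‖ * Real.exp (κ.re * x)) / ‖(2:ℂ)*κ‖) atBot atTop := by
    apply Tendsto.atTop_div_const hnorm
    have := h1.atTop_add h2.neg
    simpa [sub_eq_add_neg] using this
  apply Filter.tendsto_atTop_mono' _ _ hf
  filter_upwards [Filter.eventually_le_atBot R] with x hx
  rw [div_le_iff₀ hnorm]
  rw [mul_comm ‖u x‖]
  have h3 := aux_norm_lower (c := c₂) (c₂ := c) (κ := -κ) x (by
    have := hform x hx
    rw [show (-(-κ) * (x:ℂ)) = κ * x by ring]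
    linear_combination -this)
  simpa [Complex.neg_re, neg_mul, neg_neg, mul_neg] using h3

lemma aux_combo {u : ℝ → ℂ} (udiff : ∀ x : ℝ, HasDerivAt u (deriv u x) x)
    (hucont : Continuous u) (hu'cont : Continuous (deriv u)) (c : ℂ) {s : Set ℝ}
    (hc : Convex ℝ s)
    (hode : ∀ x ∈ s, HasDerivAt (deriv u) (c^2 * u x) x) :
    (∀ x ∈ closure s, ∀ y ∈ closure s,
      (deriv u x + c * u x) * Complex.exp (-c * x)
        = (deriv u y + c * u y) * Complex.exp (-c * y))
    ∧ (∀ x ∈ closure s, ∀ y ∈ closure s,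
      (deriv u x - c * u x) * Complex.exp (c * x)
        = (deriv u y - c * u y) * Complex.exp (c * y)) := by
  constructor
  · apply aux_const_of_linODE (w := fun y => deriv u y + c * u y)
      (hu'cont.add (continuous_const.mul hucont)) hc
    intro x hx
    have h : HasDerivAt (fun y => deriv u y + c * u y) (c^2 * u x + c * deriv u x) x :=
      (hode x hx).add ((udiff x).const_mul c)
    convert h using 1
    ring
  · have h2 := aux_const_of_linODE (w := fun y => deriv u y - c * u y) (μ := -c)
      (hu'cont.sub (continuous_const.mul hucont)) hc ?_
    · intro x hx y hy
      have h3 := h2 x hx y hy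
      simpa [neg_neg] using h3
    · intro x hx
      have h : HasDerivAt (fun y => deriv u y - c * u y) (c^2 * u x - c * deriv u x) x :=
        (hode x hx).sub ((udiff x).const_mul c)
      convert h using 1
      ring

/-- the secular equation for eigenvalues of the Klein-Gordon pencil with
a square well potential `V = −v₀·χ_{[−a,a]}`. Square roots are principal branches
(`cpow` with exponent `1/2`); the hypotheses guarantee both radicands avoid `(−∞,0]`.
An `H²` eigenfunction is encoded as a `C¹` function `u ∈ L²`, nonzero, solving the
eigenvalue equation `u'' = (m² − (V−λ)²)u` classically away from `x = ±a`. -/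
theorem stmt19 (v₀ m a : ℝ) (hv₀ : 0 < v₀) (hm : 0 < m) (ha : 0 < a)
    (V : ℝ → ℝ) (hV : ∀ x, V x = if x ∈ Set.Icc (-a) a then -v₀ else 0)
    (lam : ℂ)
    (h1 : (((v₀ : ℂ) + lam) ^ 2 - (m : ℂ) ^ 2) ∉ {z : ℂ | ∃ t : ℝ, t ≤ 0 ∧ z = (t : ℂ)})
    (h2 : ((m : ℂ) ^ 2 - lam ^ 2) ∉ {z : ℂ | ∃ t : ℝ, t ≤ 0 ∧ z = (t : ℂ)})
    (u : ℝ → ℂ) (hu : u ≠ 0)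
    (huC1 : ContDiff ℝ 1 u)
    (huL2 : MemLp u 2 (volume : Measure ℝ))
    (heq : ∀ x : ℝ, x ≠ -a → x ≠ a →
      HasDerivAt (deriv u) (((m : ℂ) ^ 2 - ((V x : ℂ) - lam) ^ 2) * u x) x) :
    2 * Complex.cot (2 * (a : ℂ) * ((((v₀ : ℂ) + lam) ^ 2 - (m : ℂ) ^ 2) ^ (1 / 2 : ℂ)))
      = ((((v₀ : ℂ) + lam) ^ 2 - (m : ℂ) ^ 2) ^ (1 / 2 : ℂ)) /
          (((m : ℂ) ^ 2 - lam ^ 2) ^ (1 / 2 : ℂ))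
        - (((m : ℂ) ^ 2 - lam ^ 2) ^ (1 / 2 : ℂ)) /
          ((((v₀ : ℂ) + lam) ^ 2 - (m : ℂ) ^ 2) ^ (1 / 2 : ℂ)) := by
  classical
  set κ : ℂ := ((m:ℂ)^2 - lam^2) ^ (1/2 : ℂ) with hκdef
  set k : ℂ := (((v₀:ℂ)+lam)^2 - (m:ℂ)^2) ^ (1/2 : ℂ) with hkdef
  have hz2 : ((m:ℂ)^2 - lam^2) ≠ 0 := fun h => h2 ⟨0, le_refl 0, by rw [h]; simp⟩
  have hz1 : (((v₀:ℂ)+lam)^2 - (m:ℂ)^2) ≠ 0 := fun h => h1 ⟨0, le_refl 0, by rw [h]; simp⟩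
  have hκ2 : κ^2 = (m:ℂ)^2 - lam^2 := aux_sqrt_sq hz2
  have hk2 : k^2 = ((v₀:ℂ)+lam)^2 - (m:ℂ)^2 := aux_sqrt_sq hz1
  have hκre : 0 < κ.re := aux_re_sqrt_pos h2
  have hkre : 0 < k.re := aux_re_sqrt_pos h1
  have hκ0 : κ ≠ 0 := fun h => by rw [h] at hκre; simp at hκre
  have hk0 : k ≠ 0 := fun h => by rw [h] at hkre; simp at hkre
  have hik0 : Complex.I * k ≠ 0 := mul_ne_zero Complex.I_ne_zero hk0
  have ucont : Continuous u := huC1.continuous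
  have u'cont : Continuous (deriv u) := huC1.continuous_deriv le_rfl
  have udiff : ∀ x : ℝ, HasDerivAt u (deriv u x) x := fun x =>
    ((huC1.differentiable one_ne_zero) x).hasDerivAt
  have hmaa : (-a : ℝ) < a := by linarith
  have hcast : ((-a : ℝ) : ℂ) = -(a:ℂ) := by push_cast; ring
  -- coefficient computations
  have hVout : ∀ x : ℝ, (a < x ∨ x < -a) → ((m:ℂ)^2 - ((V x : ℂ) - lam)^2) = κ^2 := by
    intro x hx
    have hVx : V x = 0 := by
      rw [hV, if_neg]
      intro h
      rcases hx with h' | h'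
      · exact absurd h.2 (by linarith)
      · exact absurd h.1 (by linarith)
    rw [hVx, hκ2]; push_cast; ring
  have hVin : ∀ x : ℝ, x ∈ Set.Ioo (-a) a →
      ((m:ℂ)^2 - ((V x : ℂ) - lam)^2) = (Complex.I*k)^2 := by
    intro x hx
    have hVx : V x = -v₀ := by rw [hV, if_pos ⟨hx.1.le, hx.2.le⟩]
    have hI : (Complex.I*k)^2 = -(k^2) := by rw [mul_pow, Complex.I_sq]; ring
    rw [hVx, hI, hk2]; push_cast; ring
  -- exp product facts
  have hmulκ : ∀ x : ℝ, Complex.exp (κ*x) * Complex.exp (-κ*x) = 1 := by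
    intro x
    rw [← Complex.exp_add, show κ*(x:ℂ) + -κ*x = 0 by ring, Complex.exp_zero]
  -- ===== region x > a =====
  have hodeR : ∀ x ∈ Set.Ioi a, HasDerivAt (deriv u) (κ^2 * u x) x := by
    intro x hx
    have hx' : a < x := hx
    have h := heq x (by linarith) (by linarith)
    rw [hVout x (Or.inl hx')] at h
    exact h
  obtain ⟨hP, hQ⟩ := aux_combo udiff ucont u'cont κ (convex_Ioi a) hodeR
  rw [closure_Ioi] at hP hQ
  -- ===== region x < -a =====
  have hodeL : ∀ x ∈ Set.Iio (-a), HasDerivAt (deriv u) (κ^2 * u x) x := by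
    intro x hx
    have hx' : x < -a := hx
    have h := heq x (by linarith) (by linarith)
    rw [hVout x (Or.inr hx')] at h
    exact h
  obtain ⟨hP', hQ'⟩ := aux_combo udiff ucont u'cont κ (convex_Iio (-a)) hodeL
  rw [closure_Iio] at hP' hQ'
  -- ===== inner region =====
  have hodeI : ∀ x ∈ Set.Ioo (-a) a, HasDerivAt (deriv u) ((Complex.I*k)^2 * u x) x := by
    intro x hx
    have h := heq x (ne_of_gt hx.1) (ne_of_lt hx.2)
    rw [hVin x hx] at h
    exact h
  obtain ⟨hC, hD⟩ := aux_combo udiff ucont u'cont (Complex.I*k) (convex_Ioo (-a) a) hodeI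
  rw [closure_Ioo (ne_of_lt hmaa)] at hC hD
  -- ===== decay conditions =====
  have hPzero : (deriv u a + κ * u a) * Complex.exp (-κ * (a:ℝ)) = 0 := by
    by_contra hP0
    refine aux_notL2_atTop huL2 (aux_blowup_atTop
      (c₂ := (deriv u a - κ * u a) * Complex.exp (κ * (a:ℝ))) hP0 hκre a ?_)
    intro x hx
    have ha1 := hP x hx a Set.self_mem_Ici
    have ha2 := hQ x hx a Set.self_mem_Ici
    linear_combination Complex.exp (κ*(x:ℂ)) * ha1 - Complex.exp (-κ*(x:ℂ)) * ha2
      - (2*κ*u x) * hmulκ x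
  have hQ'zero : (deriv u (-a) - κ * u (-a)) * Complex.exp (κ * ((-a : ℝ) : ℂ)) = 0 := by
    by_contra hQ0'
    refine aux_notL2_atBot huL2 (aux_blowup_atBot
      (c := (deriv u (-a) + κ * u (-a)) * Complex.exp (-κ * ((-a : ℝ) : ℂ))) hQ0' hκre (-a) ?_)
    intro x hx
    have ha1 := hP' x hx (-a) Set.self_mem_Iic
    have ha2 := hQ' x hx (-a) Set.self_mem_Iic
    linear_combination Complex.exp (κ*(x:ℂ)) * ha1 - Complex.exp (-κ*(x:ℂ)) * ha2
      - (2*κ*u x) * hmulκ x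
  -- boundary conditions
  have hba : deriv u a = -(κ * u a) := by
    rcases mul_eq_zero.1 hPzero with h' | h'
    · linear_combination h'
    · exact absurd h' (Complex.exp_ne_zero _)
  have hbma : deriv u (-a) = κ * u (-a) := by
    rcases mul_eq_zero.1 hQ'zero with h' | h'
    · linear_combination h'
    · exact absurd h' (Complex.exp_ne_zero _)
  -- matching equations across the well, with casts normalised
  have hfix1 : Complex.exp (-(Complex.I*k) * ((-a:ℝ):ℂ)) = Complex.exp (Complex.I*k*(a:ℝ)) := by
    rw [hcast]; congr 1; ring
  have hfix2 : Complex.exp ((Complex.I*k) * ((-a:ℝ):ℂ)) = Complex.exp (-(Complex.I*k)*(a:ℝ)) := by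
    rw [hcast]; congr 1; ring
  have eC : (deriv u a + Complex.I*k*u a) * Complex.exp (-(Complex.I*k) * (a:ℝ))
      = (deriv u (-a) + Complex.I*k*u (-a)) * Complex.exp (Complex.I*k*(a:ℝ)) := by
    have h := hC a (Set.right_mem_Icc.2 hmaa.le) (-a) (Set.left_mem_Icc.2 hmaa.le)
    rw [hfix1] at h
    exact h
  have eD : (deriv u a - Complex.I*k*u a) * Complex.exp (Complex.I*k*(a:ℝ))
      = (deriv u (-a) - Complex.I*k*u (-a)) * Complex.exp (-(Complex.I*k)*(a:ℝ)) := by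
    have h := hD a (Set.right_mem_Icc.2 hmaa.le) (-a) (Set.left_mem_Icc.2 hmaa.le)
    rw [hfix2] at h
    exact h
  -- nonvanishing of u at the endpoints
  have main0 : deriv u a + Complex.I*k*u a = 0 → deriv u a - Complex.I*k*u a = 0 → False := by
    intro hc1 hc2
    have hua : u a = 0 := by
      have h3 : (2 * (Complex.I * k)) * u a = 0 := by linear_combination hc1 - hc2
      rcases mul_eq_zero.1 h3 with h' | h'
      · exact absurd h' (mul_ne_zero two_ne_zero hik0)
      · exact h'
    have hdua : deriv u a = 0 := by linear_combination (1/2 : ℂ) * hc1 + (1/2 : ℂ) * hc2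
    have hu0in : ∀ x ∈ Set.Icc (-a) a, u x = 0 ∧ deriv u x = 0 := by
      intro x hx
      have ha1 := hC x hx a (Set.right_mem_Icc.2 hmaa.le)
      have ha2 := hD x hx a (Set.right_mem_Icc.2 hmaa.le)
      rw [hc1] at ha1
      rw [hc2] at ha2
      simp only [zero_mul] at ha1 ha2
      have e1 : deriv u x + Complex.I*k*u x = 0 := by
        rcases mul_eq_zero.1 ha1 with h' | h'
        · exact h'
        · exact absurd h' (Complex.exp_ne_zero _)
      have e2 : deriv u x - Complex.I*k*u x = 0 := by
        rcases mul_eq_zero.1 ha2 with h' | h'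
        · exact h'
        · exact absurd h' (Complex.exp_ne_zero _)
      constructor
      · have h3 : (2 * (Complex.I * k)) * u x = 0 := by linear_combination e1 - e2
        rcases mul_eq_zero.1 h3 with h' | h'
        · exact absurd h' (mul_ne_zero two_ne_zero hik0)
        · exact h'
      · linear_combination (1/2 : ℂ) * e1 + (1/2 : ℂ) * e2
    obtain ⟨huma, hduma⟩ := hu0in (-a) (Set.left_mem_Icc.2 hmaa.le)
    have hright : ∀ x ∈ Set.Ici a, u x = 0 := by
      intro x hx
      have ha1 := hP x hx a Set.self_mem_Ici
      have ha2 := hQ x hx a Set.self_mem_Ici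
      rw [hua, hdua] at ha1 ha2
      simp only [mul_zero, zero_mul, add_zero, zero_add, zero_sub, sub_zero, neg_zero] at ha1 ha2
      have e1 : deriv u x + κ*u x = 0 := by
        rcases mul_eq_zero.1 ha1 with h' | h'
        · exact h'
        · exact absurd h' (Complex.exp_ne_zero _)
      have e2 : deriv u x - κ*u x = 0 := by
        rcases mul_eq_zero.1 ha2 with h' | h'
        · exact h'
        · exact absurd h' (Complex.exp_ne_zero _)
      have h3 : (2 * κ) * u x = 0 := by linear_combination e1 - e2
      rcases mul_eq_zero.1 h3 with h' | h'
      · exact absurd h' (mul_ne_zero two_ne_zero hκ0)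
      · exact h'
    have hleft : ∀ x ∈ Set.Iic (-a), u x = 0 := by
      intro x hx
      have ha1 := hP' x hx (-a) Set.self_mem_Iic
      have ha2 := hQ' x hx (-a) Set.self_mem_Iic
      rw [huma, hduma] at ha1 ha2
      simp only [mul_zero, zero_mul, add_zero, zero_add, zero_sub, sub_zero, neg_zero] at ha1 ha2
      have e1 : deriv u x + κ*u x = 0 := by
        rcases mul_eq_zero.1 ha1 with h' | h'
        · exact h'
        · exact absurd h' (Complex.exp_ne_zero _)
      have e2 : deriv u x - κ*u x = 0 := by
        rcases mul_eq_zero.1 ha2 with h' | h'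
        · exact h'
        · exact absurd h' (Complex.exp_ne_zero _)
      have h3 : (2 * κ) * u x = 0 := by linear_combination e1 - e2
      rcases mul_eq_zero.1 h3 with h' | h'
      · exact absurd h' (mul_ne_zero two_ne_zero hκ0)
      · exact h'
    apply hu
    funext x
    show u x = 0
    rcases le_total x (-a) with h | h
    · exact hleft x h
    · rcases le_total x a with h' | h'
      · exact (hu0in x ⟨h, h'⟩).1
      · exact hright x h'
  have hα : u a ≠ 0 := by
    intro h0
    have hda : deriv u a = 0 := by rw [hba, h0]; ring
    apply main0 <;> rw [h0, hda] <;> ring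
  have hβ : u (-a) ≠ 0 := by
    intro h0
    have hda : deriv u (-a) = 0 := by rw [hbma, h0]; ring
    have hc1 : deriv u a + Complex.I*k*u a = 0 := by
      have h := eC
      rw [h0, hda] at h
      simp only [mul_zero, add_zero, zero_mul] at h
      rcases mul_eq_zero.1 h with h' | h'
      · exact h'
      · exact absurd h' (Complex.exp_ne_zero _)
    have hc2 : deriv u a - Complex.I*k*u a = 0 := by
      have h := eD
      rw [h0, hda] at h
      simp only [mul_zero, sub_zero, zero_mul] at h
      rcases mul_eq_zero.1 h with h' | h'
      · exact h'
      · exact absurd h' (Complex.exp_ne_zero _)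
    exact main0 hc1 hc2
  -- key relation
  have hEF : Complex.exp (Complex.I*k*(a:ℝ)) * Complex.exp (-(Complex.I*k)*(a:ℝ)) = 1 := by
    rw [← Complex.exp_add, show Complex.I*k*((a:ℝ):ℂ) + -(Complex.I*k)*((a:ℝ):ℂ) = 0 by ring,
      Complex.exp_zero]
  have q : ((deriv u a + Complex.I*k*u a) * Complex.exp (-(Complex.I*k) * (a:ℝ)))
        * ((deriv u (-a) - Complex.I*k*u (-a)) * Complex.exp (-(Complex.I*k)*(a:ℝ)))
      = ((deriv u (-a) + Complex.I*k*u (-a)) * Complex.exp (Complex.I*k*(a:ℝ)))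
        * ((deriv u a - Complex.I*k*u a) * Complex.exp (Complex.I*k*(a:ℝ))) := by
    rw [eC, ← eD]
  rw [hba, hbma] at q
  have hαβ : u a * u (-a) ≠ 0 := mul_ne_zero hα hβ
  have q2 : (u a * u (-a)) * ((κ + Complex.I*k)^2
        * (Complex.exp (Complex.I*k*(a:ℝ)) * Complex.exp (Complex.I*k*(a:ℝ))
          * (Complex.exp (Complex.I*k*(a:ℝ)) * Complex.exp (Complex.I*k*(a:ℝ))))
      - (κ - Complex.I*k)^2) = 0 := by
    linear_combination (Complex.exp (Complex.I*k*(a:ℝ)) * Complex.exp (Complex.I*k*(a:ℝ))) * q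
      + (u a * u (-a)) * (κ - Complex.I*k)^2
        * (Complex.exp (Complex.I*k*(a:ℝ)) * Complex.exp (-(Complex.I*k)*(a:ℝ)) + 1) * hEF
  have key : (κ + Complex.I*k)^2
        * (Complex.exp (Complex.I*k*(a:ℝ)) * Complex.exp (Complex.I*k*(a:ℝ))
          * (Complex.exp (Complex.I*k*(a:ℝ)) * Complex.exp (Complex.I*k*(a:ℝ))))
      = (κ - Complex.I*k)^2 := by
    rcases mul_eq_zero.1 q2 with h' | h'
    · exact absurd h' hαβ
    · linear_combination h'
  -- transfer to X = exp(2 a k I)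
  have hXE : Complex.exp (2 * (a:ℂ) * k * Complex.I)
      = Complex.exp (Complex.I*k*(a:ℝ)) * Complex.exp (Complex.I*k*(a:ℝ)) := by
    rw [← Complex.exp_add]
    congr 1
    push_cast
    ring
  have key' : (κ + Complex.I*k)^2 * (Complex.exp (2 * (a:ℂ) * k * Complex.I))^2
      = (κ - Complex.I*k)^2 := by
    rw [hXE]; linear_combination key
  have hX0 : Complex.exp (2 * (a:ℂ) * k * Complex.I) ≠ 0 := Complex.exp_ne_zero _
  -- sin ≠ 0
  have hsin : Complex.sin (2 * (a:ℂ) * k) ≠ 0 := by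
    intro h0
    obtain ⟨n, hn⟩ := Complex.sin_eq_zero_iff.1 h0
    have hX2 : (Complex.exp (2 * (a:ℂ) * k * Complex.I))^2 = 1 := by
      rw [sq, ← Complex.exp_add,
        show 2*(a:ℂ)*k*Complex.I + 2*(a:ℂ)*k*Complex.I = (2*(a:ℂ)*k)*Complex.I*2 by ring,
        hn, show ((n:ℂ)*(Real.pi:ℂ))*Complex.I*2 = (n:ℂ)*(2*(Real.pi:ℂ)*Complex.I) by ring]
      exact Complex.exp_int_mul_two_pi_mul_I n
    have h5 : (4:ℂ) * Complex.I * (κ * k) = 0 := by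
      linear_combination key' - (κ + Complex.I*k)^2 * hX2
    simp [Complex.I_ne_zero, hκ0, hk0] at h5
  -- final algebra
  have hXinv : Complex.exp (-(2 * (a:ℂ) * k) * Complex.I)
      = (Complex.exp (2 * (a:ℂ) * k * Complex.I))⁻¹ := by
    rw [neg_mul, Complex.exp_neg]
  have hXY : Complex.exp (2 * (a:ℂ) * k * Complex.I)
      * (Complex.exp (2 * (a:ℂ) * k * Complex.I))⁻¹ = 1 := mul_inv_cancel₀ hX0
  have hI2 : Complex.I ^ 2 = -1 := Complex.I_sq
  rw [Complex.cot_eq_cos_div_sin, Complex.sin, Complex.cos, hXinv]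
  rw [Complex.sin, hXinv] at hsin
  rw [div_sub_div _ _ hκ0 hk0, ← mul_div_assoc,
    div_eq_div_iff hsin (mul_ne_zero hκ0 hk0)]
  apply mul_left_cancel₀ hX0
  linear_combination (κ*k - Complex.I*(k*k-κ*κ)/2) * hXY + (-(Complex.I)/2) * key'
    + (κ*k*(Complex.exp (2 * (a:ℂ) * k * Complex.I))^2
       + Complex.I/2*k^2*(Complex.exp (2 * (a:ℂ) * k * Complex.I))^2
       + κ*k - Complex.I/2*k^2) * hI2
end
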